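/- With E(a,b,c) the block derangement number, (a-b)(a+b-c)·E(a,b,c) + a(a-b-c-1)·E(a-1,b,c) + b(a-b+c+1)·E(a,b-1,c) = 0 for all natural numbers a, b ≥ 1 and c ≥ 0. -/

import Mathlib

open Finset

/-- The binomial sum for block derangements of three players,
when the third argument is the largest. The sum is automatically `0`
when the triangle inequality `c ≤ a + b` fails. -/
def Eaux (a b c : ℕ) : ℤ :=
  ∑ k ∈ Finset.range (a + b - c + 1),
    (a.choose k : ℤ) * (b.choose (c - a + k)) * (c.choose (b - k))

/-- The block derangement number `E(a,b,c)`: the binomial sum applied with the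
largest argument placed last. -/
def E3 (a b c : ℕ) : ℤ :=
  if a ≤ c ∧ b ≤ c then Eaux a b c
  else if a ≤ b ∧ c ≤ b then Eaux a c b
  else Eaux b c a

/-- Integer-indexed binomial coefficient: zero for negative lower index. -/
def Ich (n : ℕ) (j : ℤ) : ℤ := if 0 ≤ j then (n.choose j.toNat : ℤ) else 0

lemma Ich_neg {n : ℕ} {j : ℤ} (h : j < 0) : Ich n j = 0 := by
  simp [Ich, not_le.mpr h]

lemma Ich_coe (n k : ℕ) : Ich n (k : ℤ) = n.choose k := by
  simp [Ich]

lemma Ich_gt {n : ℕ} {j : ℤ} (h : (n : ℤ) < j) : Ich n j = 0 := by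
  have h0 : 0 ≤ j := by omega
  simp only [Ich, if_pos h0]
  norm_cast
  exact Nat.choose_eq_zero_of_lt (by omega)

lemma Ich_symm (n : ℕ) (x : ℤ) : Ich n x = Ich n ((n : ℤ) - x) := by
  rcases lt_or_ge x 0 with h | h
  · rw [Ich_neg h, Ich_gt (by omega)]
  rcases le_or_gt x (n : ℤ) with h2 | h2
  · lift x to ℕ using h with t
    have h3 : t ≤ n := by exact_mod_cast h2
    rw [show (n : ℤ) - (t : ℤ) = ((n - t : ℕ) : ℤ) by omega, Ich_coe, Ich_coe,
      Nat.choose_symm h3]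
  · rw [Ich_gt h2, Ich_neg (by omega)]

lemma Ich_mul (n : ℕ) (j : ℤ) : j * Ich n j = ((n : ℤ) + 1 - j) * Ich n (j - 1) := by
  rcases lt_or_ge j 1 with h | h
  · rw [Ich_neg (show j - 1 < 0 by omega)]
    rcases lt_or_ge j 0 with h0 | h0
    · rw [Ich_neg h0]; ring
    · have hj : j = 0 := by omega
      subst hj; ring
  · lift j to ℕ using (by omega : (0:ℤ) ≤ j) with t
    have ht : 1 ≤ t := by exact_mod_cast h
    obtain ⟨s, rfl⟩ : ∃ s, t = s + 1 := ⟨t - 1, by omega⟩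
    rw [show ((s + 1 : ℕ) : ℤ) - 1 = ((s : ℕ) : ℤ) by push_cast; ring, Ich_coe, Ich_coe]
    rcases le_or_gt s n with hs | hs
    · have h0 := Nat.choose_succ_right_eq n s
      zify [hs] at h0
      push_cast
      linear_combination h0
    · rw [Nat.choose_eq_zero_of_lt (by omega), Nat.choose_eq_zero_of_lt (by omega)]
      push_cast; ring

lemma choose_succ_int (a k : ℕ) :
    ((k : ℤ) + 1) * (a.choose (k + 1) : ℤ) = ((a : ℤ) - k) * (a.choose k : ℤ) := by
  rcases le_or_gt k a with h | h
  · have h0 := Nat.choose_succ_right_eq a k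
    zify [h] at h0
    linear_combination h0
  · rw [Nat.choose_eq_zero_of_lt h, Nat.choose_eq_zero_of_lt (by omega)]
    push_cast; ring

lemma choose_pred_int {a : ℕ} (ha : 1 ≤ a) (k : ℕ) :
    (a : ℤ) * ((a - 1).choose k : ℤ) = ((a : ℤ) - k) * (a.choose k : ℤ) := by
  have h0 : a * ((a - 1).choose k) = a.choose (k + 1) * (k + 1) := by
    have h := Nat.add_one_mul_choose_eq (a - 1) k
    rwa [Nat.sub_add_cancel ha] at h
  have h1 := choose_succ_int a k
  zify at h0
  linear_combination h0 + h1

lemma ich_pred {b : ℕ} (hb : 1 ≤ b) (m : ℤ) :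
    (b : ℤ) * Ich (b - 1) m = ((b : ℤ) - m) * Ich b m := by
  rcases lt_or_ge m 0 with h | h
  · rw [Ich_neg h, Ich_neg h]; ring
  · lift m to ℕ using h with t
    rw [Ich_coe, Ich_coe]
    rcases le_or_gt t b with h2 | h2
    · have h0 := Nat.choose_mul_succ_eq (b - 1) t
      rw [Nat.sub_add_cancel hb] at h0
      zify [h2] at h0
      linear_combination h0
    · rw [Nat.choose_eq_zero_of_lt h2, Nat.choose_eq_zero_of_lt (by omega)]
      push_cast; ring

def Sf (a b c k : ℕ) : ℤ :=
  (a.choose k : ℤ) * Ich b ((c : ℤ) - a + k) * Ich c ((b : ℤ) - k)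

def S (a b c : ℕ) : ℤ := ∑ k ∈ range (a + 1), Sf a b c k

lemma Sf_zero_left {a b c k : ℕ} (h : a < k) : Sf a b c k = 0 := by
  simp [Sf, Nat.choose_eq_zero_of_lt h]

lemma Sf_zero_right {a b c k : ℕ} (h : b < k) : Sf a b c k = 0 := by
  rw [Sf, Ich_neg (show (b : ℤ) - k < 0 by omega), mul_zero]

lemma S_eq (a b c N : ℕ) (hN : a < N) : S a b c = ∑ k ∈ range N, Sf a b c k :=
  Finset.sum_subset (Finset.range_subset_range.mpr (by omega))
    (fun k _ hk => Sf_zero_left (by simp only [Finset.mem_range] at hk; omega))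

lemma S_eq' (a b c N : ℕ) (hN : b < N) : S a b c = ∑ k ∈ range N, Sf a b c k := by
  rw [S_eq a b c (max (a + 1) N) (by omega)]
  refine (Finset.sum_subset (Finset.range_subset_range.mpr (by omega)) ?_).symm
  intro k _ hk
  exact Sf_zero_right (by simp only [Finset.mem_range] at hk; omega)

lemma summand (a b c k : ℕ) (ha : 1 ≤ a) (hb : 1 ≤ b) :
    ((a : ℤ) - b) * ((a : ℤ) + b - c) * Sf a b c k
      + (a : ℤ) * ((a : ℤ) - b - c - 1) * Sf (a - 1) b c k
      + (b : ℤ) * ((a : ℤ) - b + c + 1) * Sf a (b - 1) c k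
    = ((b : ℤ) - a) * ((k : ℤ) + 1) * Sf a b c (k + 1)
      - ((b : ℤ) - a) * (k : ℤ) * Sf a b c k := by
  have hca : ((a - 1 : ℕ) : ℤ) = (a : ℤ) - 1 := by omega
  have hcb : ((b - 1 : ℕ) : ℤ) = (b : ℤ) - 1 := by omega
  have hck : ((k + 1 : ℕ) : ℤ) = (k : ℤ) + 1 := by push_cast; ring
  simp only [Sf, hca, hcb, hck]
  rw [show (c : ℤ) - ((a : ℤ) - 1) + (k : ℤ) = (c : ℤ) - a + k + 1 by ring,
      show (c : ℤ) - (a : ℤ) + ((k : ℤ) + 1) = (c : ℤ) - a + k + 1 by ring,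
      show ((b : ℤ) - 1) - (k : ℤ) = (b : ℤ) - k - 1 by ring,
      show (b : ℤ) - ((k : ℤ) + 1) = (b : ℤ) - k - 1 by ring]
  have e1 := choose_succ_int a k
  have e2 := choose_pred_int ha k
  have e3 : ((c : ℤ) - a + k + 1) * Ich b ((c : ℤ) - a + k + 1)
      = ((b : ℤ) - ((c : ℤ) - a + k)) * Ich b ((c : ℤ) - a + k) := by
    have h := Ich_mul b ((c : ℤ) - a + k + 1)
    rw [show (c : ℤ) - a + k + 1 - 1 = (c : ℤ) - a + k by ring] at h
    linear_combination h
  have e4 := ich_pred hb ((c : ℤ) - a + k)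
  have e5 : ((b : ℤ) - k) * Ich c ((b : ℤ) - k)
      = ((c : ℤ) + 1 - ((b : ℤ) - k)) * Ich c ((b : ℤ) - k - 1) := Ich_mul c ((b : ℤ) - k)
  rcases eq_or_ne ((c : ℤ) - a + k + 1) 0 with hm1 | hm1
  · have hB : Ich b ((c : ℤ) - a + k) = 0 := Ich_neg (by omega)
    have hB' : Ich (b - 1) ((c : ℤ) - a + k) = 0 := Ich_neg (by omega)
    linear_combination
      ((((a:ℤ) - b) * ((a:ℤ) + b - c) + ((b:ℤ) - a) * k) * (a.choose k : ℤ)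
          * Ich c ((b:ℤ) - k)) * hB
      + ((b:ℤ) * ((a:ℤ) - b + c + 1) * (a.choose k : ℤ) * Ich c ((b:ℤ) - k - 1)) * hB'
      + (((a:ℤ) - b - c - 1) * Ich b ((c:ℤ) - a + k + 1) * Ich c ((b:ℤ) - k)) * e2
      - (((b:ℤ) - a) * Ich b ((c:ℤ) - a + k + 1) * Ich c ((b:ℤ) - k - 1)) * e1
      - (((a:ℤ) - k) * (a.choose k : ℤ) * Ich b ((c:ℤ) - a + k + 1)) * e5
      + (-(((a:ℤ) - k) * (a.choose k : ℤ) * Ich b ((c:ℤ) - a + k + 1) * Ich c ((b:ℤ) - k))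
          - ((a:ℤ) - k) * (a.choose k : ℤ) * Ich b ((c:ℤ) - a + k + 1)
            * Ich c ((b:ℤ) - k - 1)) * hm1
  rcases eq_or_ne ((b : ℤ) - k) 0 with hj0 | hj0
  · have hC' : Ich c ((b : ℤ) - k - 1) = 0 := Ich_neg (by omega)
    refine mul_left_cancel₀ hm1 ?_
    linear_combination
      (((c:ℤ) - a + k + 1) * (b:ℤ) * ((a:ℤ) - b + c + 1) * (a.choose k : ℤ)
          * Ich (b - 1) ((c:ℤ) - a + k)
        - ((c:ℤ) - a + k + 1) * ((b:ℤ) - a) * ((k:ℤ) + 1) * (a.choose (k + 1) : ℤ)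
          * Ich b ((c:ℤ) - a + k + 1)) * hC'
      + (((a:ℤ) - b - c - 1) * ((c:ℤ) - a + k + 1) * Ich b ((c:ℤ) - a + k + 1)
          * Ich c ((b:ℤ) - k)) * e2
      + (((a:ℤ) - b - c - 1) * ((a:ℤ) - k) * (a.choose k : ℤ) * Ich c ((b:ℤ) - k)) * e3
      + (-(((c:ℤ) + 1) * ((b:ℤ) - ((c:ℤ) - a + k)) * (a.choose k : ℤ)
          * Ich b ((c:ℤ) - a + k) * Ich c ((b:ℤ) - k))) * hj0
  · refine mul_left_cancel₀ hj0 (mul_left_cancel₀ hm1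
      (mul_left_cancel₀ (show ((k : ℤ) + 1) ≠ 0 by omega) ?_))
    linear_combination
      (-(((b:ℤ) - a) * ((b:ℤ) - k) * ((c:ℤ) - a + k + 1) * ((k:ℤ) + 1)
          * Ich b ((c:ℤ) - a + k + 1) * Ich c ((b:ℤ) - k - 1))) * e1
      + (((a:ℤ) - b - c - 1) * ((b:ℤ) - k) * ((c:ℤ) - a + k + 1) * ((k:ℤ) + 1)
          * Ich b ((c:ℤ) - a + k + 1) * Ich c ((b:ℤ) - k)) * e2
      + (((a:ℤ) - k) * ((b:ℤ) - k) * ((k:ℤ) + 1)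
          * (((a:ℤ) - b - c - 1) * Ich c ((b:ℤ) - k)
             - ((b:ℤ) - a) * Ich c ((b:ℤ) - k - 1)) * (a.choose k : ℤ)) * e3
      + (((a:ℤ) - b + c + 1) * ((b:ℤ) - k) * ((c:ℤ) - a + k + 1) * ((k:ℤ) + 1)
          * (a.choose k : ℤ) * Ich c ((b:ℤ) - k - 1)) * e4
      + (((k:ℤ) + 1) * (a.choose k : ℤ) * Ich b ((c:ℤ) - a + k)
          * ((((a:ℤ) - b) * ((a:ℤ) + b - c) + ((b:ℤ) - a) * k) * ((c:ℤ) - a + k + 1)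
             + ((a:ℤ) - b - c - 1) * ((a:ℤ) - k) * ((b:ℤ) - ((c:ℤ) - a + k)))) * e5

lemma Smain (a b c : ℕ) (ha : 1 ≤ a) (hb : 1 ≤ b) :
    ((a : ℤ) - b) * ((a : ℤ) + b - c) * S a b c
      + (a : ℤ) * ((a : ℤ) - b - c - 1) * S (a - 1) b c
      + (b : ℤ) * ((a : ℤ) - b + c + 1) * S a (b - 1) c = 0 := by
  have h1 : S a b c = ∑ k ∈ range (a + 1), Sf a b c k := rfl
  rw [h1, S_eq (a - 1) b c (a + 1) (by omega), S_eq a (b - 1) c (a + 1) (by omega),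
      Finset.mul_sum, Finset.mul_sum, Finset.mul_sum,
      ← Finset.sum_add_distrib, ← Finset.sum_add_distrib]
  have hcong :
      ∑ k ∈ range (a + 1),
        (((a : ℤ) - b) * ((a : ℤ) + b - c) * Sf a b c k
          + (a : ℤ) * ((a : ℤ) - b - c - 1) * Sf (a - 1) b c k
          + (b : ℤ) * ((a : ℤ) - b + c + 1) * Sf a (b - 1) c k)
      = ∑ k ∈ range (a + 1),
          ((fun t : ℕ => ((b : ℤ) - a) * t * Sf a b c t) (k + 1)
            - (fun t : ℕ => ((b : ℤ) - a) * t * Sf a b c t) k) := by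
    refine Finset.sum_congr rfl fun k _ => ?_
    simp only
    push_cast
    exact summand a b c k ha hb
  rw [hcong]
  rw [Finset.sum_range_sub (fun t : ℕ => ((b : ℤ) - a) * t * Sf a b c t) (a + 1)]
  simp [Sf_zero_left (Nat.lt_succ_self a)]

lemma S_swap23 (a b c : ℕ) : S a b c = S a c b := by
  show (∑ k ∈ range (a + 1), Sf a b c k) = ∑ k ∈ range (a + 1), Sf a c b k
  rw [← Finset.sum_range_reflect (fun k => Sf a b c k) (a + 1)]
  apply Finset.sum_congr rfl
  intro k hk
  simp only [Finset.mem_range] at hk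
  rw [show a + 1 - 1 - k = a - k from by omega]
  unfold Sf
  have h1 : ((a - k : ℕ) : ℤ) = (a : ℤ) - k := by omega
  rw [Nat.choose_symm (by omega), h1,
      show (c : ℤ) - a + ((a : ℤ) - k) = (c : ℤ) - k from by ring,
      show (b : ℤ) - ((a : ℤ) - k) = (b : ℤ) - a + k from by ring]
  ring

lemma S_swap13 (a b c : ℕ) : S a b c = S c b a := by
  rw [S_eq' a b c (b + 1) (by omega), S_eq' c b a (b + 1) (by omega),
      ← Finset.sum_range_reflect (fun k => Sf a b c k) (b + 1)]
  apply Finset.sum_congr rfl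
  intro k hk
  simp only [Finset.mem_range] at hk
  rw [show b + 1 - 1 - k = b - k from by omega]
  unfold Sf
  have h1 : ((b - k : ℕ) : ℤ) = (b : ℤ) - k := by omega
  have h2 : Ich a ((b : ℤ) - k) = ((a.choose (b - k) : ℕ) : ℤ) := by
    rw [← h1, Ich_coe]
  rw [h1, show (c : ℤ) - a + ((b : ℤ) - k) = (b : ℤ) - ((a : ℤ) - c + k) from by ring,
      ← Ich_symm b ((a : ℤ) - c + k),
      show (b : ℤ) - ((b : ℤ) - k) = ((k : ℕ) : ℤ) from by ring,
      Ich_coe, h2]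
  ring

lemma S_swap12 (a b c : ℕ) : S a b c = S b a c := by
  rw [S_swap13, S_swap23, S_swap13]

lemma Eaux_eq_S {a b c : ℕ} (hac : a ≤ c) (hbc : b ≤ c) : Eaux a b c = S a b c := by
  have h1 : S a b c = ∑ k ∈ range (a + b - c + 1), Sf a b c k := by
    refine (Finset.sum_subset (Finset.range_subset_range.mpr (by omega : a + b - c + 1 ≤ a + 1)) ?_).symm
    intro k _ hk
    simp only [Finset.mem_range, not_lt] at hk
    rw [Sf, Ich_gt (show (b : ℤ) < (c : ℤ) - a + k by omega), mul_zero, zero_mul]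
  rw [h1, Eaux]
  apply Finset.sum_congr rfl
  intro k hk
  simp only [Finset.mem_range] at hk
  rw [Sf, show (c : ℤ) - a + k = ((c - a + k : ℕ) : ℤ) from by omega, Ich_coe,
      show (b : ℤ) - k = ((b - k : ℕ) : ℤ) from by omega, Ich_coe]

lemma E3_eq_S (a b c : ℕ) : E3 a b c = S a b c := by
  rw [E3]
  split_ifs with h1 h2
  · exact Eaux_eq_S h1.1 h1.2
  · rw [Eaux_eq_S h2.1 h2.2]
    exact (S_swap23 a b c).symm
  · have h3 : b ≤ a ∧ c ≤ a := by omega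
    rw [Eaux_eq_S h3.1 h3.2, S_swap23 b c a]
    exact (S_swap12 a b c).symm

theorem stmt11 (a b c : ℕ) (ha : 1 ≤ a) (hb : 1 ≤ b) :
    ((a : ℤ) - b) * ((a : ℤ) + b - c) * E3 a b c +
      (a : ℤ) * ((a : ℤ) - b - c - 1) * E3 (a - 1) b c +
      (b : ℤ) * ((a : ℤ) - b + c + 1) * E3 a (b - 1) c = 0 := by
  rw [E3_eq_S, E3_eq_S, E3_eq_S]
  exact Smain a b c ha hb
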